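/- Let n ≥ 1, let P be a nonempty finite subset of {0,1}^n ⊆ ℝ^n, and let V ∈ ℝ^n lie in the convex hull of P. Then for every positive integer L there exists a function x : Fin L → ℝ^n with x(i) ∈ P for every i such that for every coordinate j, |(1/L)·Σ_{i} x(i)_j − V_j| ≤ |P|/L. -/

import Mathlib

private lemma list_sum_flatMap {α β : Type*} [AddCommMonoid β] (l : List α) (f : α → List β) :
    (l.flatMap f).sum = (l.map (fun a => (f a).sum)).sum := by
  induction l with
  | nil => simp
  | cons a t ih => simp [List.flatMap_cons, ih]

/-- Discretization of a convex-hull point: any `V` in the convex hull of a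
nonempty finite set `P` of `0/1`-vectors in `ℝ^n` is approximated in each
coordinate, with error at most `|P|/L`, by the average of `L` points of `P`. -/
theorem convexHull_point_approx_by_average
    (n : ℕ) (hn : 1 ≤ n)
    (P : Finset (Fin n → ℝ)) (hP : P.Nonempty)
    (hP01 : ∀ p ∈ P, ∀ j, p j = 0 ∨ p j = 1)
    (V : Fin n → ℝ) (hV : V ∈ convexHull ℝ (P : Set (Fin n → ℝ)))
    (L : ℕ) (hL : 0 < L) :
    ∃ x : Fin L → (Fin n → ℝ), (∀ i, x i ∈ P) ∧
      ∀ j, |(1 / (L : ℝ)) * ∑ i, x i j - V j| ≤ (P.card : ℝ) / L := by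
  obtain ⟨w, hw0, hw1, hwV⟩ := Finset.mem_convexHull.1 hV
  obtain ⟨p0, hp0⟩ := hP
  have hVj : ∀ j, V j = ∑ p ∈ P, w p * p j := by
    intro j
    rw [← hwV, Finset.centerMass_eq_of_sum_1 _ _ hw1]
    simp [Finset.sum_apply]
  set k : (Fin n → ℝ) → ℕ := fun p => ⌊(L : ℝ) * w p⌋₊ with hk
  have hkle : ∀ p ∈ P, (k p : ℝ) ≤ (L : ℝ) * w p := fun p hp =>
    Nat.floor_le (mul_nonneg (Nat.cast_nonneg L) (hw0 p hp))
  have hklt : ∀ p ∈ P, (L : ℝ) * w p ≤ (k p : ℝ) + 1 :=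
    fun p hp => (Nat.lt_floor_add_one _).le
  have hsum_leR : ∑ p ∈ P, ((k p : ℝ)) ≤ (L : ℝ) := by
    calc ∑ p ∈ P, (k p : ℝ) ≤ ∑ p ∈ P, (L : ℝ) * w p := Finset.sum_le_sum hkle
    _ = L := by rw [← Finset.mul_sum, hw1, mul_one]
  have hsum_le : ∑ p ∈ P, k p ≤ L := by exact_mod_cast (by push_cast; exact hsum_leR :
    ((∑ p ∈ P, k p : ℕ) : ℝ) ≤ (L : ℝ))
  set r := L - ∑ p ∈ P, k p with hrdef
  have hrR : (r : ℝ) = (L : ℝ) - ∑ p ∈ P, (k p : ℝ) := by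
    rw [hrdef]; push_cast [hsum_le]; ring
  set l : List (Fin n → ℝ) :=
    (P.toList.flatMap fun p => List.replicate (k p) p) ++ List.replicate r p0 with hl
  have hlen : l.length = L := by
    rw [hl, List.length_append, List.length_flatMap, List.length_replicate]
    have : (List.map (List.length ∘ fun p => List.replicate (k p) p) P.toList).sum
        = ∑ p ∈ P, k p := by
      rw [show (List.length ∘ fun p => List.replicate (k p) p) = k from by
        funext p; simp]
      exact Finset.sum_map_toList P k
    simp only [Function.comp_def] at this
    rw [this]
    omega
  have hmemP : ∀ a ∈ l, a ∈ P := by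
    intro a ha
    rw [hl] at ha
    rcases List.mem_append.1 ha with h | h
    · obtain ⟨p, hp, hp2⟩ := List.mem_flatMap.1 h
      rw [List.eq_of_mem_replicate hp2]; exact Finset.mem_toList.1 hp
    · rw [List.eq_of_mem_replicate h]; exact hp0
  refine ⟨fun i => l.get ⟨i, by rw [hlen]; exact i.isLt⟩, ?_, ?_⟩
  · intro i
    exact hmemP _ (List.get_mem l _)
  · intro j
    have hlen' : (l.map fun p => p j).length = L := by rw [List.length_map, hlen]
    have hsumx : (∑ i : Fin L, l.get ⟨i, by rw [hlen]; exact i.isLt⟩ j)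
        = (l.map fun p => p j).sum := by
      rw [← Fin.sum_univ_getElem (l.map fun p => p j)]
      refine Fintype.sum_equiv (finCongr hlen'.symm) _ _ (fun i => ?_)
      simp [finCongr, List.getElem_map]
    have hmapsum : (l.map fun p => p j).sum
        = (∑ p ∈ P, (k p : ℝ) * p j) + (r : ℝ) * p0 j := by
      rw [hl, List.map_append, List.sum_append, List.map_replicate, List.sum_replicate,
        List.map_flatMap, list_sum_flatMap]
      congr 1
      · rw [show (fun a => ((List.replicate (k a) a).map fun p => p j).sum)
            = fun a => (k a : ℝ) * a j from by
          funext a; rw [List.map_replicate, List.sum_replicate]; simp [nsmul_eq_mul]]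
        exact Finset.sum_map_toList P _
      · simp [nsmul_eq_mul]
    rw [hsumx, hmapsum, hVj j]
    -- the estimate
    have hrcard : (r : ℝ) ≤ P.card := by
      rw [hrR]
      have : (L : ℝ) = ∑ p ∈ P, (L : ℝ) * w p := by rw [← Finset.mul_sum, hw1, mul_one]
      rw [this, ← Finset.sum_sub_distrib]
      calc ∑ p ∈ P, ((L : ℝ) * w p - k p) ≤ ∑ p ∈ P, 1 :=
        Finset.sum_le_sum fun p hp => by have := hklt p hp; linarith
      _ = P.card := by simp
    have hpj01 : ∀ p ∈ P, 0 ≤ p j ∧ p j ≤ 1 := fun p hp => by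
      rcases hP01 p hp j with h | h <;> simp [h]
    have herr : |((∑ p ∈ P, (k p : ℝ) * p j) + (r : ℝ) * p0 j) - (L : ℝ) * ∑ p ∈ P, w p * p j|
        ≤ (r : ℝ) := by
      have hid : (∑ p ∈ P, (k p : ℝ) * p j) + ∑ p ∈ P, ((L : ℝ) * w p - k p) * p j
          = (L : ℝ) * ∑ p ∈ P, w p * p j := by
        rw [Finset.mul_sum, ← Finset.sum_add_distrib]
        exact Finset.sum_congr rfl fun p _ => by ring
      have h1 : 0 ≤ ∑ p ∈ P, ((L : ℝ) * w p - k p) * p j :=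
        Finset.sum_nonneg fun p hp =>
          mul_nonneg (by have := hkle p hp; linarith) (hpj01 p hp).1
      have h2 : ∑ p ∈ P, ((L : ℝ) * w p - k p) * p j ≤ (r : ℝ) := by
        rw [hrR]
        have : (L : ℝ) - ∑ p ∈ P, (k p : ℝ) = ∑ p ∈ P, ((L : ℝ) * w p - k p) := by
          rw [Finset.sum_sub_distrib, ← Finset.mul_sum, hw1, mul_one]
        rw [this]
        exact Finset.sum_le_sum fun p hp => by
          nlinarith [(hpj01 p hp).1, (hpj01 p hp).2, hkle p hp]
      have h3 : 0 ≤ (r : ℝ) * p0 j := mul_nonneg (Nat.cast_nonneg r) (hpj01 p0 hp0).1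
      have h4 : (r : ℝ) * p0 j ≤ (r : ℝ) := by
        nlinarith [(hpj01 p0 hp0).2, Nat.cast_nonneg (α := ℝ) r]
      rw [abs_le]
      constructor <;> linarith
    have hLpos : (0 : ℝ) < L := by exact_mod_cast hL
    rw [show (1 / (L : ℝ)) * ((∑ p ∈ P, (k p : ℝ) * p j) + (r : ℝ) * p0 j)
          - ∑ p ∈ P, w p * p j
        = (((∑ p ∈ P, (k p : ℝ) * p j) + (r : ℝ) * p0 j) - (L : ℝ) * ∑ p ∈ P, w p * p j) / L
        from by field_simp]
    rw [abs_div, abs_of_pos hLpos]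
    gcongr
    exact herr.trans hrcard
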